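/- Let K be a field, let g and h be finite-dimensional Lie algebras over K, and let ρ: g → gl(h) and σ: h → gl(g) be representations. Define E = g* × h with bracket ⁅(φ1,Y1), (φ2,Y2)⁆_E = (σ*_{Y1}(φ2) − σ*_{Y2}(φ1), ⁅Y1,Y2⁆), where σ*_Y(φ) = −φ∘σ_Y, and define F = g × h* with bracket ⁅(X1,ψ1), (X2,ψ2)⁆_F = (⁅X2,X1⁆, ρ*_{X2}(ψ1) − ρ*_{X1}(ψ2)), where ρ*_X(ψ) = −ψ∘ρ_X. Then E and F are Lie algebras (the semidirect products g* ⋊ h and g^op ⋉ h*), the bilinear pairing ⟪(X,ψ), (φ,Y)⟫ = ψ(Y) − φ(X) between F and E is nondegenerate (so it identifies F with the dual space of E), and the following are equivalent: (i) the matched pair equations hold for (g, h, ρ, σ); (ii) (E, F) is a Lie bialgebra with respect to this pairing, i.e. for all e1, e2 ∈ E and f1, f2 ∈ F, ⟪⁅f1,f2⁆_F, ⁅e1,e2⁆_E⟫ = ⟪⁅f1·e1, f2⁆_F + ⁅f1, f2·e1⁆_F, e2⟫ − ⟪⁅f1·e2, f2⁆_F + ⁅f1, f2·e2⁆_F, e1⟫,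 where for f ∈ F and e ∈ E, f·e denotes the unique element of F with ⟪f·e, e'⟫ = ⟪f, ⁅e,e'⁆_E⟫ for all e' ∈ E. (This is the one-point-base case of the corollary that (g, h, ρ, σ) is a matched pair if and only if (A* ⋊ B, A^op ⋉ B*) is a Lie bialgebroid.) -/

import Mathlib

/-- A `K`-bilinear, alternating bracket on the `K`-vector space `V` satisfying the
Jacobi identity, i.e. a Lie algebra structure on `V` over `K`. -/
structure IsLieBracket (K V : Type*) [Field K] [AddCommGroup V] [Module K V]
    (br : V → V → V) : Prop where
  add_left : ∀ x y z, br (x + y) z = br x z + br y z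
  smul_left : ∀ (k : K) (x z : V), br (k • x) z = k • br x z
  add_right : ∀ x y z, br x (y + z) = br x y + br x z
  smul_right : ∀ (k : K) (x z : V), br x (k • z) = k • br x z
  alternate : ∀ x, br x x = 0
  jacobi : ∀ x y z, br (br x y) z + br (br y z) x + br (br z x) y = 0

attribute [local instance 100] LieRing.ofAssociativeRing

section

variable (K g h : Type*) [Field K]
  [LieRing g] [LieAlgebra K g] [LieRing h] [LieAlgebra K h]

/-- The semidirect product bracket on `E = g* ⋊ h`:
`⁅(φ₁,Y₁), (φ₂,Y₂)⁆ = (σ*_{Y₁} φ₂ − σ*_{Y₂} φ₁, ⁅Y₁,Y₂⁆)`, where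
`σ*_Y φ = −φ ∘ σ_Y` is the contragredient of `σ`. -/
def brE (σ : h →ₗ⁅K⁆ Module.End K g) :
    Module.Dual K g × h → Module.Dual K g × h → Module.Dual K g × h :=
  fun e₁ e₂ => ((-(e₂.1 ∘ₗ σ e₁.2)) - (-(e₁.1 ∘ₗ σ e₂.2)), ⁅e₁.2, e₂.2⁆)

/-- The semidirect product bracket on `F = g^op ⋉ h*`:
`⁅(X₁,ψ₁), (X₂,ψ₂)⁆ = (⁅X₂,X₁⁆, ρ*_{X₂} ψ₁ − ρ*_{X₁} ψ₂)`, where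
`ρ*_X ψ = −ψ ∘ ρ_X` is the contragredient of `ρ`. -/
def brF (ρ : g →ₗ⁅K⁆ Module.End K h) :
    g × Module.Dual K h → g × Module.Dual K h → g × Module.Dual K h :=
  fun f₁ f₂ => (⁅f₂.1, f₁.1⁆, (-(f₁.2 ∘ₗ ρ f₂.1)) - (-(f₂.2 ∘ₗ ρ f₁.1)))

/-- The pairing `⟪(X,ψ), (φ,Y)⟫ = ψ(Y) − φ(X)` between `F = g × h*` and `E = g* × h`. -/
def dblPair : g × Module.Dual K h → Module.Dual K g × h → K :=
  fun f e => f.2 e.2 - e.1 f.1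

end

set_option linter.unusedSectionVars false

section aux

lemma jac' {L : Type*} [LieRing L] (a b c : L) :
    ⁅⁅a,b⁆,c⁆ + ⁅⁅b,c⁆,a⁆ + ⁅⁅c,a⁆,b⁆ = 0 := by
  rw [← lie_skew ⁅a,b⁆ c, ← lie_skew ⁅b,c⁆ a, ← lie_skew ⁅c,a⁆ b,
    ← neg_add, ← neg_add, neg_eq_zero]
  exact lie_jacobi c a b

variable (K g h : Type*) [Field K]
  [LieRing g] [LieAlgebra K g] [LieRing h] [LieAlgebra K h]
  (σ : h →ₗ⁅K⁆ Module.End K g) (ρ : g →ₗ⁅K⁆ Module.End K h)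

lemma isLieBracket_brE : IsLieBracket K (Module.Dual K g × h) (brE K g h σ) := by
  constructor
  · intro x y z; refine Prod.ext ?_ (by simp [brE]) ; ext X; simp [brE]; try ring
  · intro k x z; refine Prod.ext ?_ (by simp [brE]) ; ext X; simp [brE]; try ring
  · intro x y z; refine Prod.ext ?_ (by simp [brE]) ; ext X; simp [brE]; try ring
  · intro k x z; refine Prod.ext ?_ (by simp [brE]) ; ext X; simp [brE]; try ring
  · intro x; simp [brE, Prod.ext_iff]
  · intro x y z
    refine Prod.ext ?_ ?_ <;>
      simp only [brE, Prod.fst_add, Prod.snd_add, Prod.fst_zero, Prod.snd_zero]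
    · ext X
      simp [LieHom.map_lie, Ring.lie_def, Module.End.mul_apply]
      ring
    · exact jac' _ _ _

lemma isLieBracket_brF : IsLieBracket K (g × Module.Dual K h) (brF K g h ρ) := by
  constructor
  · intro x y z; refine Prod.ext (by simp [brF]) ?_ ; ext Y; simp [brF]; try ring
  · intro k x z; refine Prod.ext (by simp [brF]) ?_ ; ext Y; simp [brF]; try ring
  · intro x y z; refine Prod.ext (by simp [brF]) ?_ ; ext Y; simp [brF]; try ring
  · intro k x z; refine Prod.ext (by simp [brF]) ?_ ; ext Y; simp [brF]; try ring
  · intro x; simp [brF, Prod.ext_iff]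
  · intro x y z
    refine Prod.ext ?_ ?_ <;>
      simp only [brF, Prod.fst_add, Prod.snd_add, Prod.fst_zero, Prod.snd_zero]
    · rw [add_right_comm]; exact lie_jacobi z.1 y.1 x.1
    · ext Y
      simp [LieHom.map_lie, Ring.lie_def, Module.End.mul_apply]
      ring

variable [FiniteDimensional K g] [FiniteDimensional K h]

lemma dblPair_left_nondeg (f : g × Module.Dual K h)
    (hf : ∀ e, dblPair K g h f e = 0) : f = 0 := by
  refine Prod.ext ?_ ?_
  · rw [Prod.fst_zero, ← Module.forall_dual_apply_eq_zero_iff K f.1]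
    intro φ; simpa [dblPair] using hf (φ, 0)
  · rw [Prod.snd_zero]; ext Y; simpa [dblPair] using hf (0, Y)

lemma dblPair_right_nondeg (e : Module.Dual K g × h)
    (he : ∀ f, dblPair K g h f e = 0) : e = 0 := by
  refine Prod.ext ?_ ?_
  · rw [Prod.fst_zero]; ext X; simpa [dblPair] using he (X, 0)
  · rw [Prod.snd_zero, ← Module.forall_dual_apply_eq_zero_iff K e.2]
    intro ψ; simpa [dblPair] using he (0, ψ)

lemma dblPair_sub (f f' : g × Module.Dual K h) (e : Module.Dual K g × h) :
    dblPair K g h (f - f') e = dblPair K g h f e - dblPair K g h f' e := by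
  simp [dblPair]; ring

/-- The explicit formula for the coadjoint-type action `f · e`. -/
def Dot : g × Module.Dual K h → Module.Dual K g × h → g × Module.Dual K h :=
  fun f e => (-(σ e.2 f.1),
    f.2 ∘ₗ (LieAlgebra.ad K h e.2 : Module.End K h) - e.1 ∘ₗ (σ.toLinearMap.flip f.1))

lemma Dot_pair (f : g × Module.Dual K h) (e e' : Module.Dual K g × h) :
    dblPair K g h (Dot K g h σ f e) e' = dblPair K g h f (brE K g h σ e e') := by
  simp [Dot, dblPair, brE, LieAlgebra.ad_apply]
  ring

end aux

/-- **Matched pairs of Lie algebras correspond to semidirect-product Lie bialgebras**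
(the one-point-base case of: `(A, B, ρ, σ)` is a matched pair iff
`(A* ⋊ B, A^op ⋉ B*)` is a Lie bialgebroid). Let `ρ : g → gl(h)` and `σ : h → gl(g)`
be representations of finite-dimensional Lie algebras on each other's underlying
vector spaces. Then `E = g* ⋊ h` and `F = g^op ⋉ h*` are Lie algebras, the pairing
`⟪(X,ψ), (φ,Y)⟫ = ψ(Y) − φ(X)` between `F` and `E` is nondegenerate, and the matched
pair equations hold for `(g, h, ρ, σ)` if and only if `(E, F)` is a Lie bialgebra with
respect to this pairing, i.e. the cocycle condition holds, where for `f ∈ F` and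
`e ∈ E`, `f·e` denotes the (unique) element of `F` with `⟪f·e, e'⟫ = ⟪f, ⁅e,e'⁆_E⟫`
for all `e' ∈ E`. -/
theorem matchedPair_iff_semidirect_lieBialgebra
    (K g h : Type*) [Field K]
    [LieRing g] [LieAlgebra K g] [FiniteDimensional K g]
    [LieRing h] [LieAlgebra K h] [FiniteDimensional K h]
    (ρ : g →ₗ⁅K⁆ Module.End K h) (σ : h →ₗ⁅K⁆ Module.End K g)
    (dot : g × Module.Dual K h → Module.Dual K g × h → g × Module.Dual K h)
    (hdot : ∀ f e e', dblPair K g h (dot f e) e' = dblPair K g h f (brE K g h σ e e')) :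
    IsLieBracket K (Module.Dual K g × h) (brE K g h σ)
    ∧ IsLieBracket K (g × Module.Dual K h) (brF K g h ρ)
    ∧ (∀ f, (∀ e, dblPair K g h f e = 0) → f = 0)
    ∧ (∀ e, (∀ f, dblPair K g h f e = 0) → e = 0)
    ∧ (((∀ (X : g) (Y₁ Y₂ : h), ρ X ⁅Y₁, Y₂⁆ =
          ⁅ρ X Y₁, Y₂⁆ + ⁅Y₁, ρ X Y₂⁆ + ρ (σ Y₂ X) Y₁ - ρ (σ Y₁ X) Y₂)
        ∧ (∀ (Y : h) (X₁ X₂ : g), σ Y ⁅X₁, X₂⁆ =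
          ⁅σ Y X₁, X₂⁆ + ⁅X₁, σ Y X₂⁆ + σ (ρ X₂ Y) X₁ - σ (ρ X₁ Y) X₂))
      ↔ (∀ e₁ e₂ f₁ f₂,
          dblPair K g h (brF K g h ρ f₁ f₂) (brE K g h σ e₁ e₂) =
            dblPair K g h
              (brF K g h ρ (dot f₁ e₁) f₂ + brF K g h ρ f₁ (dot f₂ e₁)) e₂
            - dblPair K g h
              (brF K g h ρ (dot f₁ e₂) f₂ + brF K g h ρ f₁ (dot f₂ e₂)) e₁)) := by
  have dot_eq : ∀ f e, dot f e = Dot K g h σ f e := by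
    intro f e
    have hz : ∀ e', dblPair K g h (dot f e - Dot K g h σ f e) e' = 0 := by
      intro e'
      rw [dblPair_sub, hdot, Dot_pair, sub_self]
    have := dblPair_left_nondeg K g h _ hz
    exact sub_eq_zero.mp this
  have rneg : ∀ a : g, ρ (-a) = -(ρ a) := fun a => by simpa using map_neg ρ.toLinearMap a
  have sneg : ∀ b : h, σ (-b) = -(σ b) := fun b => by simpa using map_neg σ.toLinearMap b
  refine ⟨isLieBracket_brE K g h σ, isLieBracket_brF K g h ρ,
    dblPair_left_nondeg K g h, dblPair_right_nondeg K g h, ?_, ?_⟩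
  · rintro ⟨MP1, MP2⟩ e₁ e₂ f₁ f₂
    rw [dot_eq, dot_eq, dot_eq, dot_eq]
    have h1 := congrArg f₂.2 (MP1 f₁.1 e₁.2 e₂.2)
    have h2 := congrArg f₁.2 (MP1 f₂.1 e₁.2 e₂.2)
    have h3 := congrArg e₂.1 (MP2 e₁.2 f₂.1 f₁.1)
    have h4 := congrArg e₁.1 (MP2 e₂.2 f₂.1 f₁.1)
    have s1 : f₂.2 ⁅e₂.2, ρ f₁.1 e₁.2⁆ = -f₂.2 ⁅ρ f₁.1 e₁.2, e₂.2⁆ := by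
      rw [← lie_skew, map_neg]
    have s2 : f₁.2 ⁅e₂.2, ρ f₂.1 e₁.2⁆ = -f₁.2 ⁅ρ f₂.1 e₁.2, e₂.2⁆ := by
      rw [← lie_skew, map_neg]
    simp only [brE, brF, dblPair, Dot, Prod.fst_add, Prod.snd_add, Prod.mk_add_mk,
      LinearMap.add_apply, LinearMap.sub_apply, LinearMap.neg_apply, LinearMap.comp_apply,
      LinearMap.flip_apply, LieHom.coe_toLinearMap, LieAlgebra.ad_apply,
      rneg, sneg, map_add, map_sub, map_neg, map_zero, lie_neg, neg_lie] at h1 h2 h3 h4 ⊢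
    linear_combination h1 - h2 + h3 - h4 + s1 - s2
  · intro hc
    constructor
    · intro X Y₁ Y₂
      rw [← sub_eq_zero, ← Module.forall_dual_apply_eq_zero_iff K]
      intro ψ
      have := hc (0, Y₁) (0, Y₂) (X, 0) (0, ψ)
      rw [dot_eq, dot_eq, dot_eq, dot_eq] at this
      have s1 : ψ ⁅Y₂, ρ X Y₁⁆ = -ψ ⁅ρ X Y₁, Y₂⁆ := by rw [← lie_skew, map_neg]
      simp only [brE, brF, dblPair, Dot, Prod.fst_add, Prod.snd_add, Prod.mk_add_mk,
        LinearMap.add_apply, LinearMap.sub_apply, LinearMap.neg_apply, LinearMap.comp_apply,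
        LinearMap.flip_apply, LieHom.coe_toLinearMap, LieAlgebra.ad_apply,
        rneg, sneg, map_add, map_sub, map_neg, map_zero, lie_neg, neg_lie, lie_zero, zero_lie,
        LinearMap.zero_apply, LinearMap.zero_comp, LinearMap.comp_zero,
        map_zero, neg_zero, sub_zero, zero_sub, add_zero, zero_add] at this ⊢
      linear_combination this - s1
    · intro Y X₁ X₂
      rw [← sub_eq_zero, ← Module.forall_dual_apply_eq_zero_iff K]
      intro φ
      have := hc (0, Y) (φ, 0) (X₂, 0) (X₁, 0)
      rw [dot_eq, dot_eq, dot_eq, dot_eq] at this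
      simp only [brE, brF, dblPair, Dot, Prod.fst_add, Prod.snd_add, Prod.mk_add_mk,
        LinearMap.add_apply, LinearMap.sub_apply, LinearMap.neg_apply, LinearMap.comp_apply,
        LinearMap.flip_apply, LieHom.coe_toLinearMap, LieAlgebra.ad_apply,
        rneg, sneg, map_add, map_sub, map_neg, map_zero, lie_neg, neg_lie, lie_zero, zero_lie,
        LinearMap.zero_apply, LinearMap.zero_comp, LinearMap.comp_zero,
        map_zero, neg_zero, sub_zero, zero_sub, add_zero, zero_add] at this ⊢
      linear_combination this
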